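/- arXiv:2005.02953 — 2 statements merged into one kernel-verified Lean document; each statement's English description precedes it below -/
import Mathlib

section
/- Let X and Y be real-valued random variables on a probability space with joint cumulative distribution function H(x,y) = P(X ≤ x and Y ≤ y) and marginal cumulative distribution functions F(x) = P(X ≤ x) and G(y) = P(Y ≤ y). Then there exists a bivariate copula C : [0,1]² → ℝ such that H(x,y) = C(F(x), G(y)) for all real x, y. -/
open MeasureTheory
open scoped ProbabilityTheory
open Set
open scoped ENNReal

/-- A bivariate copula: a function `C : [0,1]² → ℝ` (here defined on all of `ℝ × ℝ`,
with the copula properties required on `[0,1]²`) satisfying the grounding,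
marginal-uniformity and 2-increasing conditions. -/
def IsBivariateCopula (C : ℝ → ℝ → ℝ) : Prop :=
  (∀ u ∈ Set.Icc (0:ℝ) 1, C u 0 = 0) ∧
  (∀ v ∈ Set.Icc (0:ℝ) 1, C 0 v = 0) ∧
  (∀ u ∈ Set.Icc (0:ℝ) 1, C u 1 = u) ∧
  (∀ v ∈ Set.Icc (0:ℝ) 1, C 1 v = v) ∧
  (∀ a₁ b₁ a₂ b₂ : ℝ, a₁ ∈ Set.Icc (0:ℝ) 1 → b₁ ∈ Set.Icc (0:ℝ) 1 →
    a₂ ∈ Set.Icc (0:ℝ) 1 → b₂ ∈ Set.Icc (0:ℝ) 1 → a₁ ≤ b₁ → a₂ ≤ b₂ →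
    0 ≤ C b₁ b₂ - C a₁ b₂ - C b₁ a₂ + C a₁ a₂)

noncomputable section

namespace SklarAux

/-- Uniform measure on (0,1). -/
def mu01 : Measure ℝ := volume.restrict (Set.Ioo 0 1)

instance : IsProbabilityMeasure mu01 :=
  ⟨by simp [mu01, Real.volume_Ioo]⟩

/-- cdf of a measure. -/
def Fc (ν : Measure ℝ) (x : ℝ) : ℝ := (ν (Iic x)).toReal

/-- left limit of the cdf. -/
def Fl (ν : Measure ℝ) (x : ℝ) : ℝ := (ν (Iio x)).toReal

variable (ν : Measure ℝ) [IsProbabilityMeasure ν]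

lemma Fc_mono : Monotone (Fc ν) := fun a b hab =>
  ENNReal.toReal_mono (measure_ne_top ν _) (measure_mono (Iic_subset_Iic.2 hab))

lemma Fl_mono : Monotone (Fl ν) := fun a b hab =>
  ENNReal.toReal_mono (measure_ne_top ν _) (measure_mono (Iio_subset_Iio hab))

lemma Fc_nonneg (x : ℝ) : 0 ≤ Fc ν x := ENNReal.toReal_nonneg
lemma Fl_nonneg (x : ℝ) : 0 ≤ Fl ν x := ENNReal.toReal_nonneg

lemma Fc_le_one (x : ℝ) : Fc ν x ≤ 1 := by
  have := prob_le_one (μ := ν) (s := Iic x)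
  simpa [Fc] using ENNReal.toReal_mono (by simp) this

lemma Fl_le_Fc (x : ℝ) : Fl ν x ≤ Fc ν x :=
  ENNReal.toReal_mono (measure_ne_top ν _) (measure_mono Iio_subset_Iic_self)

lemma Fc_le_Fl {x y : ℝ} (h : x < y) : Fc ν x ≤ Fl ν y :=
  ENNReal.toReal_mono (measure_ne_top ν _) (measure_mono fun z hz => lt_of_le_of_lt hz h)

lemma ofReal_Fc (x : ℝ) : ENNReal.ofReal (Fc ν x) = ν (Iic x) :=
  ENNReal.ofReal_toReal (measure_ne_top ν _)

lemma ofReal_Fl (x : ℝ) : ENNReal.ofReal (Fl ν x) = ν (Iio x) :=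
  ENNReal.ofReal_toReal (measure_ne_top ν _)

lemma measurable_Fc : Measurable (Fc ν) := (Fc_mono ν).measurable
lemma measurable_Fl : Measurable (Fl ν) := (Fl_mono ν).measurable

/-- The "flat part" of the cdf to the right of `x` is null. -/
lemma flat_null (x : ℝ) : ν {z | x < z ∧ Fc ν z ≤ Fc ν x} = 0 := by
  set S := {z | x < z ∧ Fc ν z ≤ Fc ν x} with hS
  have key : ∀ y, x < y → Fc ν y ≤ Fc ν x → ν (Ioc x y) = 0 := by
    intro y hy hFy
    have hle : ν (Iic y) ≤ ν (Iic x) := by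
      rw [← ofReal_Fc, ← ofReal_Fc]; exact ENNReal.ofReal_le_ofReal hFy
    have hsplit : ν (Iic x) + ν (Ioc x y) = ν (Iic y) := by
      rw [← measure_union (Iic_disjoint_Ioc le_rfl) measurableSet_Ioc,
        Iic_union_Ioc_eq_Iic hy.le]
    by_contra h
    have : ν (Iic x) < ν (Iic x) + ν (Ioc x y) :=
      ENNReal.lt_add_right (measure_ne_top ν _) h
    rw [hsplit] at this
    exact absurd hle (not_le.2 this)
  have hcover : S ⊆ (⋃ q : ℚ, if x < (q : ℝ) ∧ Fc ν q ≤ Fc ν x then Ioc x (q : ℝ) else ∅)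
      ∪ {z | z ∈ S ∧ ∀ w ∈ S, w ≤ z} := by
    intro z hz
    by_cases hmax : ∀ w ∈ S, w ≤ z
    · exact Or.inr ⟨hz, hmax⟩
    · push_neg at hmax
      obtain ⟨w, hwS, hzw⟩ := hmax
      obtain ⟨q, hq1, hq2⟩ := exists_rat_btwn hzw
      refine Or.inl (mem_iUnion.2 ⟨q, ?_⟩)
      rw [if_pos ⟨hz.1.trans hq1, le_trans (Fc_mono ν hq2.le) hwS.2⟩]
      exact ⟨hz.1, hq1.le⟩
  refine le_antisymm ?_ zero_le
  refine le_trans (measure_mono hcover) ?_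
  refine le_trans (measure_union_le _ _) ?_
  have h0 : ∀ q : ℚ, ν (if x < (q : ℝ) ∧ Fc ν q ≤ Fc ν x then Ioc x (q : ℝ) else ∅) = 0 := by
    intro q; split_ifs with h
    · exact key q h.1 h.2
    · exact measure_empty
  have h1 : ν (⋃ q : ℚ, if x < (q : ℝ) ∧ Fc ν q ≤ Fc ν x then Ioc x (q : ℝ) else ∅) = 0 := by
    refine le_antisymm (le_trans (measure_iUnion_le _) ?_) zero_le
    simp [h0]
  have h2 : ν {z | z ∈ S ∧ ∀ w ∈ S, w ≤ z} = 0 := by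
    rcases Set.eq_empty_or_nonempty {z | z ∈ S ∧ ∀ w ∈ S, w ≤ z} with he | ⟨m, hm⟩
    · simp [he]
    · have hsub : {z | z ∈ S ∧ ∀ w ∈ S, w ≤ z} ⊆ Ioc x m := by
        intro z hz
        exact ⟨hz.1.1, hm.2 z hz.1⟩
      refine le_antisymm (le_trans (measure_mono hsub) ?_) zero_le
      exact le_of_eq (key m hm.1.1 hm.1.2)
  simp only [h1, h2, zero_add, le_refl]

/-- The set where the cdf vanishes is null. -/
lemma bot_null : ν {z | Fc ν z ≤ 0} = 0 := by
  set S := {z : ℝ | Fc ν z ≤ 0} with hS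
  have key : ∀ y : ℝ, Fc ν y ≤ 0 → ν (Iic y) = 0 := by
    intro y hy
    rw [← ofReal_Fc]
    exact ENNReal.ofReal_eq_zero.2 hy
  have hcover : S ⊆ (⋃ q : ℚ, if Fc ν q ≤ 0 then Iic (q : ℝ) else ∅)
      ∪ {z | z ∈ S ∧ ∀ w ∈ S, w ≤ z} := by
    intro z hz
    by_cases hmax : ∀ w ∈ S, w ≤ z
    · exact Or.inr ⟨hz, hmax⟩
    · push_neg at hmax
      obtain ⟨w, hwS, hzw⟩ := hmax
      obtain ⟨q, hq1, hq2⟩ := exists_rat_btwn hzw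
      refine Or.inl (mem_iUnion.2 ⟨q, ?_⟩)
      rw [if_pos (le_trans (Fc_mono ν hq2.le) hwS)]
      exact hq1.le
  refine le_antisymm ?_ zero_le
  refine le_trans (measure_mono hcover) ?_
  refine le_trans (measure_union_le _ _) ?_
  have h0 : ∀ q : ℚ, ν (if Fc ν q ≤ 0 then Iic (q : ℝ) else ∅) = 0 := by
    intro q; split_ifs with h
    · exact key q h
    · exact measure_empty
  have h1 : ν (⋃ q : ℚ, if Fc ν q ≤ 0 then Iic (q : ℝ) else ∅) = 0 := by
    refine le_antisymm (le_trans (measure_iUnion_le _) ?_) zero_le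
    simp [h0]
  have h2 : ν {z | z ∈ S ∧ ∀ w ∈ S, w ≤ z} = 0 := by
    rcases Set.eq_empty_or_nonempty {z | z ∈ S ∧ ∀ w ∈ S, w ≤ z} with he | ⟨m, hm⟩
    · simp [he]
    · have hsub : {z | z ∈ S ∧ ∀ w ∈ S, w ≤ z} ⊆ Iic m := fun z hz => hm.2 z hz.1
      refine le_antisymm (le_trans (measure_mono hsub) ?_) zero_le
      exact le_of_eq (key m hm.1)
  simp only [h1, h2, zero_add, le_refl]

/-- The distributional transform. -/
def U (ν : Measure ℝ) (p : ℝ × ℝ) : ℝ := Fl ν p.1 + p.2 * (Fc ν p.1 - Fl ν p.1)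

variable (ν : Measure ℝ) [IsProbabilityMeasure ν]

lemma measurable_U : Measurable (U ν) := by
  refine Measurable.add ?_ (measurable_snd.mul ?_)
  · exact (measurable_Fl ν).comp measurable_fst
  · exact ((measurable_Fc ν).comp measurable_fst).sub ((measurable_Fl ν).comp measurable_fst)

/-- Pointwise comparison of the transform event with the original event. -/
lemma U_iff {x z t : ℝ} (ht : t ∈ Ioo (0:ℝ) 1)
    (hN : ¬(x < z ∧ Fc ν z ≤ Fc ν x)) :
    U ν (z, t) ≤ Fc ν x ↔ z ≤ x := by
  have hd : 0 ≤ Fc ν z - Fl ν z := sub_nonneg.2 (Fl_le_Fc ν z)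
  constructor
  · intro hU
    by_contra hzx
    push_neg at hzx
    have hFl : Fc ν x ≤ Fl ν z := Fc_le_Fl ν hzx
    have htd : 0 ≤ t * (Fc ν z - Fl ν z) := mul_nonneg ht.1.le hd
    simp only [U] at hU
    have h1 : Fl ν z = Fc ν x := le_antisymm (by linarith) hFl
    have h2 : t * (Fc ν z - Fl ν z) = 0 := by linarith
    rcases mul_eq_zero.1 h2 with h | h
    · exact absurd h (ne_of_gt ht.1)
    · exact hN ⟨hzx, by linarith⟩
  · intro hz
    have h1 : t * (Fc ν z - Fl ν z) ≤ Fc ν z - Fl ν z := by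
      nlinarith [ht.2, hd]
    have h2 : Fc ν z ≤ Fc ν x := Fc_mono ν hz
    simp only [U]; linarith

/-- Uniformity of the distributional transform. -/
lemma uniform {u : ℝ} (h0 : 0 ≤ u) (h1 : u ≤ 1) :
    (ν.prod mu01) {p | U ν p ≤ u} = ENNReal.ofReal u := by
  have hsmeas : MeasurableSet {p : ℝ × ℝ | U ν p ≤ u} :=
    measurableSet_le (measurable_U ν) measurable_const
  have hmuIoo : mu01 (Ioo (0:ℝ) 1)ᶜ = 0 := by
    simp [mu01, Measure.restrict_apply (measurableSet_Ioo.compl)]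
  rcases eq_or_lt_of_le h1 with h1' | h1'
  · -- u = 1
    subst h1'
    have hcompl : {p : ℝ × ℝ | U ν p ≤ 1}ᶜ ⊆ (univ : Set ℝ) ×ˢ (Ioo (0:ℝ) 1)ᶜ := by
      intro p hp
      simp only [mem_compl_iff, mem_setOf_eq, not_le] at hp
      refine ⟨trivial, fun htIoo => ?_⟩
      have hd : 0 ≤ Fc ν p.1 - Fl ν p.1 := sub_nonneg.2 (Fl_le_Fc ν p.1)
      have h2 : p.2 * (Fc ν p.1 - Fl ν p.1) ≤ Fc ν p.1 - Fl ν p.1 := by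
        nlinarith [htIoo.2, htIoo.1]
      have := Fc_le_one ν p.1
      simp only [U] at hp; linarith
    have hc0 : (ν.prod mu01) {p : ℝ × ℝ | U ν p ≤ 1}ᶜ = 0 := by
      refine le_antisymm (le_trans (measure_mono hcompl) ?_) zero_le
      rw [Measure.prod_prod]
      simp [hmuIoo]
    have := measure_add_measure_compl (μ := ν.prod mu01) hsmeas
    rw [hc0, add_zero, measure_univ] at this
    rw [this]; simp
  rcases eq_or_lt_of_le h0 with h0' | h0'
  · -- u = 0
    subst h0'
    have hsub : {p : ℝ × ℝ | U ν p ≤ 0} ⊆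
        ({z | Fc ν z ≤ 0} ×ˢ (univ : Set ℝ)) ∪ ((univ : Set ℝ) ×ˢ (Ioo (0:ℝ) 1)ᶜ) := by
      intro p hp
      simp only [mem_setOf_eq, U] at hp
      by_cases htIoo : p.2 ∈ Ioo (0:ℝ) 1
      · left
        have hd : 0 ≤ Fc ν p.1 - Fl ν p.1 := sub_nonneg.2 (Fl_le_Fc ν p.1)
        have hFl : 0 ≤ Fl ν p.1 := Fl_nonneg ν p.1
        have htd : 0 ≤ p.2 * (Fc ν p.1 - Fl ν p.1) := mul_nonneg htIoo.1.le hd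
        have h2 : p.2 * (Fc ν p.1 - Fl ν p.1) = 0 := by linarith
        rcases mul_eq_zero.1 h2 with h | h
        · exact absurd h (ne_of_gt htIoo.1)
        · exact ⟨by simp only [mem_setOf_eq]; linarith, trivial⟩
      · exact Or.inr ⟨trivial, htIoo⟩
    refine le_antisymm (le_trans (measure_mono hsub) ?_) (by simp)
    refine le_trans (measure_union_le _ _) ?_
    rw [Measure.prod_prod, Measure.prod_prod]
    simp [hmuIoo, bot_null ν]
  -- main case 0 < u < 1
  have hne : {x : ℝ | u ≤ Fc ν x}.Nonempty := by
    have hU : (⋃ n : ℕ, Iic (n : ℝ)) = univ := by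
      ext z; simp only [mem_iUnion, mem_Iic, mem_univ, iff_true]
      exact exists_nat_ge z
    have hmono : Monotone (fun n : ℕ => Iic (n : ℝ)) :=
      monotone_nat_of_le_succ fun n => Iic_subset_Iic.2 (by exact_mod_cast Nat.le_succ n)
    have hdir : Directed (· ⊆ ·) (fun n : ℕ => Iic (n : ℝ)) := hmono.directed_le
    have hmeas := hdir.measure_iUnion (μ := ν)
    rw [hU, measure_univ] at hmeas
    have hlt : ENNReal.ofReal u < ⨆ n : ℕ, ν (Iic (n : ℝ)) := by
      rw [← hmeas]; exact ENNReal.ofReal_lt_one.2 h1'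
    obtain ⟨n, hn⟩ := lt_iSup_iff.mp hlt
    refine ⟨(n : ℝ), ?_⟩
    rw [← ofReal_Fc] at hn
    exact le_of_lt ((ENNReal.ofReal_lt_ofReal_iff_of_nonneg h0).1 hn)
  have hbdd : BddBelow {x : ℝ | u ≤ Fc ν x} := by
    have hI : (⋂ n : ℕ, Iic (-(n : ℝ))) = ∅ := by
      ext z; simp only [mem_iInter, mem_Iic, mem_empty_iff_false, iff_false, not_forall, not_le]
      obtain ⟨n, hn⟩ := exists_nat_gt (-z)
      exact ⟨n, by linarith⟩
    have hanti : Antitone (fun n : ℕ => Iic (-(n : ℝ))) := by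
      refine antitone_nat_of_succ_le fun n => Iic_subset_Iic.2 ?_
      simp only [neg_le_neg_iff]
      exact_mod_cast Nat.le_succ n
    have hdir : Directed (· ⊇ ·) (fun n : ℕ => Iic (-(n : ℝ))) := hanti.directed_ge
    have hmeas := Directed.measure_iInter (μ := ν)
      (fun n : ℕ => measurableSet_Iic.nullMeasurableSet) hdir ⟨0, measure_ne_top ν _⟩
    rw [hI, measure_empty] at hmeas
    have hlt : ⨅ n : ℕ, ν (Iic (-(n : ℝ))) < ENNReal.ofReal u := by
      rw [← hmeas]; exact ENNReal.ofReal_pos.2 h0'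
    obtain ⟨n, hn⟩ := iInf_lt_iff.mp hlt
    refine ⟨-(n : ℝ), fun z hz => ?_⟩
    by_contra h
    push_neg at h
    have : ν (Iic z) ≤ ν (Iic (-(n : ℝ))) := measure_mono (Iic_subset_Iic.2 h.le)
    have hzlt : ν (Iic z) < ENNReal.ofReal u := lt_of_le_of_lt this hn
    rw [← ofReal_Fc] at hzlt
    have hlt2 := (ENNReal.ofReal_lt_ofReal_iff_of_nonneg (Fc_nonneg ν z)).1 hzlt
    simp only [mem_setOf_eq] at hz
    linarith
  set q := sInf {x : ℝ | u ≤ Fc ν x} with hq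
  -- u ≤ Fc ν q
  have hFcq : u ≤ Fc ν q := by
    have key : ∀ ε : ℝ, 0 < ε → u ≤ Fc ν (q + ε) := by
      intro ε hε
      obtain ⟨s, hsS, hs⟩ := (csInf_lt_iff hbdd hne).1 (lt_add_of_pos_right q hε)
      exact le_trans hsS (Fc_mono ν hs.le)
    have hIic : Iic q = ⋂ n : ℕ, Iic (q + 1 / (n + 1)) := by
      ext z
      simp only [mem_Iic, mem_iInter]
      constructor
      · intro hz n; have : (0:ℝ) < 1 / (n + 1) := by positivity
        linarith
      · intro hz
        by_contra h
        push_neg at h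
        obtain ⟨n, hn⟩ := exists_nat_one_div_lt (sub_pos.2 h)
        have := hz n
        linarith
    have hanti : Antitone (fun n : ℕ => Iic (q + 1 / ((n : ℝ) + 1))) := by
      refine antitone_nat_of_succ_le fun n => Iic_subset_Iic.2 ?_
      have : (1 : ℝ) / (n + 1 + 1) ≤ 1 / (n + 1) :=
        one_div_le_one_div_of_le (by positivity) (by linarith)
      push_cast; linarith
    have hdir : Directed (· ⊇ ·) (fun n : ℕ => Iic (q + 1 / ((n : ℝ) + 1))) := hanti.directed_ge
    have hmeas := Directed.measure_iInter (μ := ν)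
      (fun n : ℕ => measurableSet_Iic.nullMeasurableSet) hdir ⟨0, measure_ne_top ν _⟩
    rw [← hIic] at hmeas
    have hle : ENNReal.ofReal u ≤ ν (Iic q) := by
      rw [hmeas]
      refine le_iInf fun n => ?_
      rw [← ofReal_Fc]
      exact ENNReal.ofReal_le_ofReal (key (1 / ((n : ℝ) + 1)) (by positivity))
    rw [← ofReal_Fc] at hle
    exact (ENNReal.ofReal_le_ofReal_iff (Fc_nonneg ν q)).1 hle
  -- Fl ν q ≤ u
  have hFlq : Fl ν q ≤ u := by
    have hIio : Iio q = ⋃ n : ℕ, Iic (q - 1 / (n + 1)) := by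
      ext z
      simp only [mem_Iio, mem_iUnion, mem_Iic]
      constructor
      · intro hz
        obtain ⟨n, hn⟩ := exists_nat_one_div_lt (sub_pos.2 hz)
        exact ⟨n, by linarith⟩
      · rintro ⟨n, hn⟩
        have : (0:ℝ) < 1 / (n + 1) := by positivity
        linarith
    have hmono : Monotone (fun n : ℕ => Iic (q - 1 / ((n : ℝ) + 1))) := by
      refine monotone_nat_of_le_succ fun n => Iic_subset_Iic.2 ?_
      have : (1 : ℝ) / (n + 1 + 1) ≤ 1 / (n + 1) :=
        one_div_le_one_div_of_le (by positivity) (by linarith)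
      push_cast; linarith
    have hdir : Directed (· ⊆ ·) (fun n : ℕ => Iic (q - 1 / ((n : ℝ) + 1))) := hmono.directed_le
    have hmeas := hdir.measure_iUnion (μ := ν)
    rw [← hIio] at hmeas
    have hle : ν (Iio q) ≤ ENNReal.ofReal u := by
      rw [hmeas]
      refine iSup_le fun n => ?_
      have hlt : q - 1 / ((n : ℝ) + 1) < q := by
        have : (0:ℝ) < 1 / (n + 1) := by positivity
        linarith
      have hnot : q - 1 / ((n : ℝ) + 1) ∉ {x : ℝ | u ≤ Fc ν x} := fun hm =>
        absurd (csInf_le hbdd hm) (not_le.2 hlt)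
      simp only [mem_setOf_eq, not_le] at hnot
      rw [← ofReal_Fc]
      exact ENNReal.ofReal_le_ofReal hnot.le
    rw [← ofReal_Fl] at hle
    exact (ENNReal.ofReal_le_ofReal_iff h0).1 hle
  -- the sliced integrand
  set g : ℝ → ℝ≥0∞ := fun x =>
    if Fc ν x ≤ u then 1
    else if Fl ν x ≤ u then ENNReal.ofReal ((u - Fl ν x) / (Fc ν x - Fl ν x))
    else 0 with hg
  have hgx : ∀ x, g x = if Fc ν x ≤ u then 1
      else if Fl ν x ≤ u then ENNReal.ofReal ((u - Fl ν x) / (Fc ν x - Fl ν x))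
      else 0 := fun _ => rfl
  have hslice : ∀ x : ℝ, mu01 (Prod.mk x ⁻¹' {p : ℝ × ℝ | U ν p ≤ u}) = g x := by
    intro x
    have hpre : Prod.mk x ⁻¹' {p : ℝ × ℝ | U ν p ≤ u}
        = {t : ℝ | Fl ν x + t * (Fc ν x - Fl ν x) ≤ u} := rfl
    have hsetm : MeasurableSet {t : ℝ | Fl ν x + t * (Fc ν x - Fl ν x) ≤ u} :=
      measurableSet_le (measurable_const.add (measurable_id.mul_const _)) measurable_const
    rw [hpre, mu01, Measure.restrict_apply hsetm]
    have hd : 0 ≤ Fc ν x - Fl ν x := sub_nonneg.2 (Fl_le_Fc ν x)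
    by_cases hc : Fc ν x ≤ u
    · have : {t : ℝ | Fl ν x + t * (Fc ν x - Fl ν x) ≤ u} ∩ Ioo 0 1 = Ioo 0 1 := by
        refine inter_eq_right.2 fun t ht => ?_
        simp only [mem_setOf_eq]
        nlinarith [ht.1, ht.2]
      rw [this, hgx, if_pos hc, Real.volume_Ioo]
      simp
    · by_cases hl : Fl ν x ≤ u
      · have hdpos : 0 < Fc ν x - Fl ν x := by push_neg at hc; linarith
        have hr1 : (u - Fl ν x) / (Fc ν x - Fl ν x) < 1 := by
          rw [div_lt_one hdpos]; push_neg at hc; linarith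
        have hIc : {t : ℝ | Fl ν x + t * (Fc ν x - Fl ν x) ≤ u} ∩ Ioo 0 1
            = Ioc 0 ((u - Fl ν x) / (Fc ν x - Fl ν x)) := by
          ext t
          simp only [mem_inter_iff, mem_setOf_eq, mem_Ioo, mem_Ioc]
          constructor
          · rintro ⟨h, ht0, _⟩
            exact ⟨ht0, by rw [le_div_iff₀ hdpos]; linarith⟩
          · rintro ⟨ht0, htr⟩
            rw [le_div_iff₀ hdpos] at htr
            exact ⟨by linarith, ht0, lt_of_le_of_lt (by rw [← le_div_iff₀ hdpos] at htr; exact htr) hr1⟩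
        rw [hIc, Real.volume_Ioc, hgx, if_neg hc, if_pos hl]
        simp
      · have : {t : ℝ | Fl ν x + t * (Fc ν x - Fl ν x) ≤ u} ∩ Ioo 0 1 = ∅ := by
          ext t
          simp only [mem_inter_iff, mem_setOf_eq, mem_Ioo, mem_empty_iff_false, iff_false,
            not_and, and_imp]
          intro h ht0 _
          push_neg at hl
          nlinarith
        rw [this, hgx, if_neg hc, if_neg hl]
        simp
  rw [Measure.prod_apply hsmeas, lintegral_congr hslice]
  -- now compute ∫⁻ g ∂ν
  have hgmeas : Measurable g := by
    refine Measurable.ite (measurableSet_le (measurable_Fc ν) measurable_const) measurable_const ?_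
    refine Measurable.ite (measurableSet_le (measurable_Fl ν) measurable_const) ?_ measurable_const
    exact ENNReal.measurable_ofReal.comp
      ((measurable_const.sub (measurable_Fl ν)).div ((measurable_Fc ν).sub (measurable_Fl ν)))
  have hsplit1 : ∫⁻ x, g x ∂ν = ∫⁻ x in Iio q, g x ∂ν + ∫⁻ x in Ici q, g x ∂ν := by
    rw [← lintegral_add_compl g measurableSet_Iio, compl_Iio]
  have hIci : (Ici q : Set ℝ) = {q} ∪ Ioi q := by
    ext z; simp only [mem_Ici, mem_union, mem_singleton_iff, mem_Ioi]
    constructor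
    · intro h; rcases eq_or_lt_of_le h with h' | h'
      · exact Or.inl h'.symm
      · exact Or.inr h'
    · rintro (rfl | h)
      · exact le_rfl
      · exact h.le
  have hsplit2 : ∫⁻ x in Ici q, g x ∂ν = ∫⁻ x in {q}, g x ∂ν + ∫⁻ x in Ioi q, g x ∂ν := by
    rw [hIci, lintegral_union measurableSet_Ioi
      (disjoint_singleton_left.2 (by simp))]
  have hP1 : ∫⁻ x in Iio q, g x ∂ν = ENNReal.ofReal (Fl ν q) := by
    have : ∀ x ∈ Iio q, g x = 1 := by
      intro x hx
      have hnot : x ∉ {y : ℝ | u ≤ Fc ν y} := fun hm =>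
        absurd (csInf_le hbdd hm) (not_le.2 hx)
      simp only [mem_setOf_eq, not_le] at hnot
      rw [hgx]; simp only [if_pos hnot.le]
    rw [setLIntegral_congr_fun measurableSet_Iio this,
      setLIntegral_one, ofReal_Fl]
  have hpoint : ν {q} = ENNReal.ofReal (Fc ν q - Fl ν q) := by
    have hsplit : ν (Iio q) + ν {q} = ν (Iic q) := by
      rw [← measure_union
        (disjoint_singleton_right.2 (by simp)) (measurableSet_singleton q)]
      congr 1
      ext z; simp only [mem_union, mem_Iio, mem_singleton_iff, mem_Iic]
      constructor
      · rintro (h | rfl)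
        · exact h.le
        · exact le_rfl
      · intro h; rcases eq_or_lt_of_le h with h' | h'
        · exact Or.inr h'
        · exact Or.inl h'
    have := hsplit
    rw [← ofReal_Fl, ← ofReal_Fc] at this
    rw [ENNReal.ofReal_sub _ (Fl_nonneg ν q), ← this]
    rw [ENNReal.add_sub_cancel_left (by simp)]
  have hP2 : ∫⁻ x in {q}, g x ∂ν = ENNReal.ofReal (u - Fl ν q) := by
    rw [lintegral_singleton, hpoint]
    by_cases hcq : Fc ν q ≤ u
    · have hequ : Fc ν q = u := le_antisymm hcq hFcq
      rw [hgx, if_pos hcq, one_mul, hequ]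
    · rw [hgx]; simp only [if_neg hcq, if_pos hFlq]
      push_neg at hcq
      have hdpos : 0 < Fc ν q - Fl ν q := by linarith
      rw [← ENNReal.ofReal_mul (div_nonneg (by linarith) hdpos.le),
        div_mul_cancel₀ _ (ne_of_gt hdpos)]
  have hP3 : ∫⁻ x in Ioi q, g x ∂ν = 0 := by
    have hae : ∀ᵐ x ∂ν, x ∉ {z : ℝ | q < z ∧ Fc ν z ≤ Fc ν q} := by
      rw [ae_iff]
      simpa using flat_null ν q
    calc ∫⁻ x in Ioi q, g x ∂ν = ∫⁻ x in Ioi q, 0 ∂ν := by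
          refine lintegral_congr_ae ?_
          filter_upwards [ae_restrict_of_ae hae, ae_restrict_mem measurableSet_Ioi]
            with x hxN hxq
          have hFlx : u ≤ Fl ν x := le_trans hFcq (Fc_le_Fl ν hxq)
          have hFcx : ¬Fc ν x ≤ u := by
            intro h
            exact hxN ⟨hxq, le_trans h hFcq⟩
          rw [hgx]; simp only [if_neg hFcx]
          split_ifs with hflx
          · exact ENNReal.ofReal_eq_zero.2
              (div_nonpos_of_nonpos_of_nonneg (by linarith) (by linarith [Fl_le_Fc ν x]))
          · rfl
      _ = 0 := lintegral_zero
  rw [hsplit1, hsplit2, hP1, hP2, hP3, add_zero,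
    ← ENNReal.ofReal_add (Fl_nonneg ν q) (sub_nonneg.2 hFlq)]
  ring_nf

/-- 2-increasing property for joint measures of nested events. -/
lemma two_increasing {α : Type*} [MeasurableSpace α] (μ : Measure α) [IsFiniteMeasure μ]
    {A A' B B' : Set α} (hA : MeasurableSet A) (hA' : MeasurableSet A')
    (hB : MeasurableSet B) (hB' : MeasurableSet B')
    (hAA : A' ⊆ A) (hBB : B' ⊆ B) :
    0 ≤ (μ (A ∩ B)).toReal - (μ (A' ∩ B)).toReal - (μ (A ∩ B')).toReal + (μ (A' ∩ B')).toReal := by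
  have key : ∀ Bx : Set α, MeasurableSet Bx →
      (μ (A ∩ Bx)).toReal = (μ (A' ∩ Bx)).toReal + (μ ((A \ A') ∩ Bx)).toReal := by
    intro Bx hBx
    have hdisj : Disjoint (A' ∩ Bx) ((A \ A') ∩ Bx) := by
      rw [Set.disjoint_left]
      rintro z ⟨hz1, _⟩ ⟨hz2, _⟩
      exact hz2.2 hz1
    have hunion : (A' ∩ Bx) ∪ ((A \ A') ∩ Bx) = A ∩ Bx := by
      rw [← union_inter_distrib_right, union_diff_cancel hAA]
    rw [← hunion, measure_union hdisj ((hA.diff hA').inter hBx),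
      ENNReal.toReal_add (measure_ne_top μ _) (measure_ne_top μ _)]
  have h1 := key B hB
  have h2 := key B' hB'
  have h3 : (μ ((A \ A') ∩ B')).toReal ≤ (μ ((A \ A') ∩ B)).toReal :=
    ENNReal.toReal_mono (measure_ne_top μ _) (measure_mono (inter_subset_inter_right _ hBB))
  linarith

end SklarAux

open SklarAux


/-- **Sklar's theorem (bivariate case).** For real random variables `X, Y` with joint CDF
`H(x,y) = P(X ≤ x ∧ Y ≤ y)` and marginals `F(x) = P(X ≤ x)`, `G(y) = P(Y ≤ y)`,
there is a bivariate copula `C` with `H(x,y) = C(F(x), G(y))` for all `x, y`. -/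
theorem sklar_bivariate {Ω : Type*} [MeasureSpace Ω]
    [IsProbabilityMeasure (ℙ : Measure Ω)]
    (X Y : Ω → ℝ) (hX : Measurable X) (hY : Measurable Y) :
    ∃ C : ℝ → ℝ → ℝ, IsBivariateCopula C ∧
      ∀ x y : ℝ,
        (ℙ {ω | X ω ≤ x ∧ Y ω ≤ y}).toReal =
          C ((ℙ {ω | X ω ≤ x}).toReal) ((ℙ {ω | Y ω ≤ y}).toReal) := by
  classical
  have hpair : Measurable fun ω => (X ω, Y ω) := hX.prodMk hY
  set π : Measure (ℝ × ℝ) := Measure.map (fun ω => (X ω, Y ω)) ℙ with hπ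
  haveI : IsProbabilityMeasure π := Measure.isProbabilityMeasure_map hpair.aemeasurable
  set ν : Measure ℝ := Measure.map X ℙ with hν
  set ρ : Measure ℝ := Measure.map Y ℙ with hρ
  haveI : IsProbabilityMeasure ν := Measure.isProbabilityMeasure_map hX.aemeasurable
  haveI : IsProbabilityMeasure ρ := Measure.isProbabilityMeasure_map hY.aemeasurable
  have hν' : π.map Prod.fst = ν := by
    rw [hπ, Measure.map_map measurable_fst hpair]; rfl
  have hρ' : π.map Prod.snd = ρ := by
    rw [hπ, Measure.map_map measurable_snd hpair]; rfl
  set P : Measure ((ℝ × ℝ) × ℝ) := π.prod mu01 with hP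
  haveI : IsProbabilityMeasure P := by infer_instance
  -- the projections
  have hφ : Measurable fun p : (ℝ × ℝ) × ℝ => (p.1.1, p.2) :=
    (measurable_fst.fst).prodMk measurable_snd
  have hψ : Measurable fun p : (ℝ × ℝ) × ℝ => (p.1.2, p.2) :=
    (measurable_fst.snd).prodMk measurable_snd
  have hmapφ : P.map (fun p : (ℝ × ℝ) × ℝ => (p.1.1, p.2)) = ν.prod mu01 := by
    have : (fun p : (ℝ × ℝ) × ℝ => (p.1.1, p.2)) = Prod.map Prod.fst id := rfl
    rw [this, hP, ← Measure.map_prod_map π mu01 measurable_fst measurable_id,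
      Measure.map_id, hν']
  have hmapψ : P.map (fun p : (ℝ × ℝ) × ℝ => (p.1.2, p.2)) = ρ.prod mu01 := by
    have : (fun p : (ℝ × ℝ) × ℝ => (p.1.2, p.2)) = Prod.map Prod.snd id := rfl
    rw [this, hP, ← Measure.map_prod_map π mu01 measurable_snd measurable_id,
      Measure.map_id, hρ']
  -- the transformed events
  set A : ℝ → Set ((ℝ × ℝ) × ℝ) := fun u => {p | U ν (p.1.1, p.2) ≤ u} with hA
  set B : ℝ → Set ((ℝ × ℝ) × ℝ) := fun v => {p | U ρ (p.1.2, p.2) ≤ v} with hB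
  have hAm : ∀ u, MeasurableSet (A u) := fun u =>
    measurableSet_le ((measurable_U ν).comp hφ) measurable_const
  have hBm : ∀ v, MeasurableSet (B v) := fun v =>
    measurableSet_le ((measurable_U ρ).comp hψ) measurable_const
  have hAmono : ∀ {u u'}, u ≤ u' → A u ⊆ A u' := fun h p hp => le_trans hp h
  have hBmono : ∀ {v v'}, v ≤ v' → B v ⊆ B v' := fun h p hp => le_trans hp h
  -- marginal uniformity
  have hPA : ∀ u : ℝ, 0 ≤ u → u ≤ 1 → P (A u) = ENNReal.ofReal u := by
    intro u h0 h1
    have : A u = (fun p : (ℝ × ℝ) × ℝ => (p.1.1, p.2)) ⁻¹' {q : ℝ × ℝ | U ν q ≤ u} := rfl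
    rw [this, ← Measure.map_apply hφ (measurableSet_le (measurable_U ν) measurable_const),
      hmapφ, uniform ν h0 h1]
  have hPB : ∀ v : ℝ, 0 ≤ v → v ≤ 1 → P (B v) = ENNReal.ofReal v := by
    intro v h0 h1
    have : B v = (fun p : (ℝ × ℝ) × ℝ => (p.1.2, p.2)) ⁻¹' {q : ℝ × ℝ | U ρ q ≤ v} := rfl
    rw [this, ← Measure.map_apply hψ (measurableSet_le (measurable_U ρ) measurable_const),
      hmapψ, uniform ρ h0 h1]
  -- ae identification of events
  have haeIoo : ∀ᵐ p ∂P, p.2 ∈ Ioo (0:ℝ) 1 := by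
    rw [ae_iff]
    have : {p : (ℝ × ℝ) × ℝ | ¬p.2 ∈ Ioo (0:ℝ) 1} = (univ : Set (ℝ × ℝ)) ×ˢ (Ioo (0:ℝ) 1)ᶜ := by
      ext p; simp [Set.mem_prod]
    rw [this, hP, Measure.prod_prod]
    simp [mu01, Measure.restrict_apply (measurableSet_Ioo.compl)]
  have haeA : ∀ x : ℝ, A (Fc ν x) =ᵐ[P] {p : (ℝ × ℝ) × ℝ | p.1.1 ≤ x} := by
    intro x
    have hflat : ∀ᵐ p ∂P, ¬(x < p.1.1 ∧ Fc ν p.1.1 ≤ Fc ν x) := by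
      rw [ae_iff]
      have hset : {p : (ℝ × ℝ) × ℝ | ¬¬(x < p.1.1 ∧ Fc ν p.1.1 ≤ Fc ν x)}
          = (fun p : (ℝ × ℝ) × ℝ => (p.1.1, p.2)) ⁻¹'
            ({z : ℝ | x < z ∧ Fc ν z ≤ Fc ν x} ×ˢ (univ : Set ℝ)) := by
        ext p; simp [Set.mem_prod, not_not]
      have hms : MeasurableSet ({z : ℝ | x < z ∧ Fc ν z ≤ Fc ν x} ×ˢ (univ : Set ℝ)) := by
        refine MeasurableSet.prod ?_ MeasurableSet.univ
        exact (measurableSet_lt measurable_const measurable_id).inter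
          (measurableSet_le (measurable_Fc ν) measurable_const)
      rw [hset, ← Measure.map_apply hφ hms, hmapφ, Measure.prod_prod, flat_null ν x,
        zero_mul]
    rw [Filter.eventuallyEq_set]
    filter_upwards [haeIoo, hflat] with p hpt hpN
    exact U_iff ν hpt hpN
  have haeB : ∀ y : ℝ, B (Fc ρ y) =ᵐ[P] {p : (ℝ × ℝ) × ℝ | p.1.2 ≤ y} := by
    intro y
    have hflat : ∀ᵐ p ∂P, ¬(y < p.1.2 ∧ Fc ρ p.1.2 ≤ Fc ρ y) := by
      rw [ae_iff]
      have hset : {p : (ℝ × ℝ) × ℝ | ¬¬(y < p.1.2 ∧ Fc ρ p.1.2 ≤ Fc ρ y)}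
          = (fun p : (ℝ × ℝ) × ℝ => (p.1.2, p.2)) ⁻¹'
            ({z : ℝ | y < z ∧ Fc ρ z ≤ Fc ρ y} ×ˢ (univ : Set ℝ)) := by
        ext p; simp [Set.mem_prod, not_not]
      have hms : MeasurableSet ({z : ℝ | y < z ∧ Fc ρ z ≤ Fc ρ y} ×ˢ (univ : Set ℝ)) := by
        refine MeasurableSet.prod ?_ MeasurableSet.univ
        exact (measurableSet_lt measurable_const measurable_id).inter
          (measurableSet_le (measurable_Fc ρ) measurable_const)
      rw [hset, ← Measure.map_apply hψ hms, hmapψ, Measure.prod_prod, flat_null ρ y,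
        zero_mul]
    rw [Filter.eventuallyEq_set]
    filter_upwards [haeIoo, hflat] with p hpt hpN
    exact U_iff ρ hpt hpN
  -- define the copula
  refine ⟨fun u v => (P (A u ∩ B v)).toReal, ⟨?_, ?_, ?_, ?_, ?_⟩, ?_⟩
  · -- C u 0 = 0
    intro u _
    show (P (A u ∩ B 0)).toReal = 0
    have : P (A u ∩ B 0) ≤ P (B 0) := measure_mono inter_subset_right
    rw [hPB 0 le_rfl zero_le_one] at this
    simp only [ENNReal.ofReal_zero, le_zero_iff] at this
    rw [this]; simp
  · -- C 0 v = 0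
    intro v _
    show (P (A 0 ∩ B v)).toReal = 0
    have : P (A 0 ∩ B v) ≤ P (A 0) := measure_mono inter_subset_left
    rw [hPA 0 le_rfl zero_le_one] at this
    simp only [ENNReal.ofReal_zero, le_zero_iff] at this
    rw [this]; simp
  · -- C u 1 = u
    intro u hu
    show (P (A u ∩ B 1)).toReal = u
    have hB1 : P (B 1)ᶜ = 0 := by
      rw [measure_compl (hBm 1) (measure_ne_top P _), hPB 1 zero_le_one le_rfl]
      simp
    have h1 : P (A u ∩ B 1) = P (A u) := by
      refine le_antisymm (measure_mono inter_subset_left) ?_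
      calc P (A u) ≤ P (A u ∩ B 1) + P (B 1)ᶜ := by
            refine le_trans (measure_mono ?_) (measure_union_le _ _)
            intro p hp
            by_cases hpB : p ∈ B 1
            · exact Or.inl ⟨hp, hpB⟩
            · exact Or.inr hpB
        _ = P (A u ∩ B 1) := by rw [hB1, add_zero]
    rw [h1, hPA u hu.1 hu.2, ENNReal.toReal_ofReal hu.1]
  · -- C 1 v = v
    intro v hv
    show (P (A 1 ∩ B v)).toReal = v
    have hA1 : P (A 1)ᶜ = 0 := by
      rw [measure_compl (hAm 1) (measure_ne_top P _), hPA 1 zero_le_one le_rfl]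
      simp
    have h1 : P (A 1 ∩ B v) = P (B v) := by
      refine le_antisymm (measure_mono inter_subset_right) ?_
      calc P (B v) ≤ P (A 1 ∩ B v) + P (A 1)ᶜ := by
            refine le_trans (measure_mono ?_) (measure_union_le _ _)
            intro p hp
            by_cases hpA : p ∈ A 1
            · exact Or.inl ⟨hpA, hp⟩
            · exact Or.inr hpA
        _ = P (A 1 ∩ B v) := by rw [hA1, add_zero]
    rw [h1, hPB v hv.1 hv.2, ENNReal.toReal_ofReal hv.1]
  · -- 2-increasing
    intro a₁ b₁ a₂ b₂ _ _ _ _ h1 h2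
    exact two_increasing P (hAm b₁) (hAm a₁) (hBm b₂) (hBm a₂) (hAmono h1) (hBmono h2)
  · -- the Sklar identity
    intro x y
    show (ℙ {ω | X ω ≤ x ∧ Y ω ≤ y}).toReal
      = (P (A ((ℙ {ω | X ω ≤ x}).toReal) ∩ B ((ℙ {ω | Y ω ≤ y}).toReal))).toReal
    have hFx : (ℙ {ω | X ω ≤ x}).toReal = Fc ν x := by
      rw [Fc, hν, Measure.map_apply hX measurableSet_Iic]; rfl
    have hGy : (ℙ {ω | Y ω ≤ y}).toReal = Fc ρ y := by
      rw [Fc, hρ, Measure.map_apply hY measurableSet_Iic]; rfl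
    rw [hFx, hGy]
    have hcongr : P (A (Fc ν x) ∩ B (Fc ρ y))
        = P ({p : (ℝ × ℝ) × ℝ | p.1.1 ≤ x} ∩ {p : (ℝ × ℝ) × ℝ | p.1.2 ≤ y}) :=
      measure_congr ((haeA x).inter (haeB y))
    have hprod : ({p : (ℝ × ℝ) × ℝ | p.1.1 ≤ x} ∩ {p : (ℝ × ℝ) × ℝ | p.1.2 ≤ y})
        = (Iic x ×ˢ Iic y) ×ˢ (univ : Set ℝ) := by
      ext p
      simp only [mem_inter_iff, mem_setOf_eq, Set.mem_prod, mem_Iic, mem_univ, and_true]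
    have hπval : π (Iic x ×ˢ Iic y) = ℙ {ω | X ω ≤ x ∧ Y ω ≤ y} := by
      rw [hπ, Measure.map_apply hpair (measurableSet_Iic.prod measurableSet_Iic)]
      rfl
    rw [hcongr, hprod, hP, Measure.prod_prod, measure_univ, mul_one, hπval]

end
end

section
/- Let Z₁ and Z₃ be independent standard Gaussian random variables, ρ ∈ [−1,1], and set Z₂ = ρ·Z₁ + √(1−ρ²)·Z₃. Let S_f(0) > 0, Q(0) > 0, σ₁ ≥ 0, σ₂ ≥ 0, T > 0 and r, r_f, μ ∈ ℝ. Define S_f(T) = S_f(0)·e^{(μ − σ₁²/2)T + σ₁√T·Z₁} and Q(T) = Q(0)·e^{(r − r_f − σ₂²/2)T + σ₂√T·Z₂}. Then E[ Q(T)·S_f(T) ] = Q(0)·S_f(0)·e^{rT} if and only if μ·T = ( r − ( r − r_f + ρσ₁σ₂ ) )·T; in particular, if T > 0 this holds if and only if μ = r − ( r − r_f + ρσ₁σ₂ ). -/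
open MeasureTheory ProbabilityTheory
open scoped ProbabilityTheory

open scoped NNReal ENNReal
open Real in
lemma mgf_std_gaussian (t : ℝ) :
    ∫ x, Real.exp (t * x) ∂(gaussianReal 0 1) = Real.exp (t ^ 2 / 2) := by
  rw [gaussianReal_of_var_ne_zero 0 one_ne_zero, gaussianPDF_def]
  rw [show (fun x => ENNReal.ofReal (gaussianPDFReal 0 1 x))
      = fun x => ((Real.toNNReal (gaussianPDFReal 0 1 x) : ℝ≥0) : ℝ≥0∞) from rfl]
  rw [integral_withDensity_eq_integral_smul
    ((measurable_gaussianPDFReal 0 1).real_toNNReal) _]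
  have h : ∀ x : ℝ, (Real.toNNReal (gaussianPDFReal 0 1 x) : ℝ≥0) • Real.exp (t * x)
      = Real.exp (t ^ 2 / 2) * gaussianPDFReal t 1 x := by
    intro x
    rw [NNReal.smul_def, Real.coe_toNNReal _ (gaussianPDFReal_nonneg 0 1 x)]
    simp only [gaussianPDFReal, NNReal.coe_one, mul_one]
    rw [smul_eq_mul]
    have he : rexp (t * x) * rexp (-(x - 0) ^ 2 / 2) = rexp (t ^ 2 / 2) * rexp (-(x - t) ^ 2 / 2) := by
      rw [← Real.exp_add, ← Real.exp_add]; congr 1; ring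
    linear_combination (√(2 * π))⁻¹ * he
  simp only [h]
  rw [integral_const_mul, integral_gaussianPDFReal_eq_one t one_ne_zero, mul_one]


/-- **Quanto drift.** With `Z₂ = ρZ₁ + √(1−ρ²)Z₃` built from independent standard
Gaussians `Z₁, Z₃`, lognormal `S_f(T)` with drift `μ` and lognormal exchange rate
`Q(T)` with drift `r − r_f`, the martingale condition
`E[Q(T)·S_f(T)] = Q(0)·S_f(0)·e^{rT}` holds iff `μT = (r − (r − r_f + ρσ₁σ₂))T`;
in particular (as `T > 0`) iff `μ = r − (r − r_f + ρσ₁σ₂)`. -/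
theorem quanto_drift_iff {Ω : Type*} [MeasureSpace Ω]
    [IsProbabilityMeasure (ℙ : Measure Ω)]
    (Z₁ Z₃ : Ω → ℝ) (hZ₁m : Measurable Z₁) (hZ₃m : Measurable Z₃)
    (hZ₁ : Measure.map Z₁ (ℙ : Measure Ω) = gaussianReal 0 1)
    (hZ₃ : Measure.map Z₃ (ℙ : Measure Ω) = gaussianReal 0 1)
    (hindep : IndepFun Z₁ Z₃ (ℙ : Measure Ω))
    (ρ : ℝ) (hρ : ρ ∈ Set.Icc (-1 : ℝ) 1)
    (Z₂ : Ω → ℝ) (hZ₂ : Z₂ = fun ω => ρ * Z₁ ω + Real.sqrt (1 - ρ ^ 2) * Z₃ ω)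
    (Sf0 Q0 σ₁ σ₂ T r rf μ : ℝ)
    (hSf0 : 0 < Sf0) (hQ0 : 0 < Q0) (hσ₁ : 0 ≤ σ₁) (hσ₂ : 0 ≤ σ₂) (hT : 0 < T)
    (SfT QT : Ω → ℝ)
    (hSfT : SfT = fun ω => Sf0 * Real.exp ((μ - σ₁ ^ 2 / 2) * T + σ₁ * Real.sqrt T * Z₁ ω))
    (hQT : QT = fun ω => Q0 * Real.exp ((r - rf - σ₂ ^ 2 / 2) * T + σ₂ * Real.sqrt T * Z₂ ω)) :
    ((∫ ω, QT ω * SfT ω ∂(ℙ : Measure Ω)) = Q0 * Sf0 * Real.exp (r * T) ↔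
        μ * T = (r - (r - rf + ρ * σ₁ * σ₂)) * T) ∧
      ((∫ ω, QT ω * SfT ω ∂(ℙ : Measure Ω)) = Q0 * Sf0 * Real.exp (r * T) ↔
        μ = r - (r - rf + ρ * σ₁ * σ₂)) := by
  obtain ⟨hρ1, hρ2⟩ := hρ
  set a : ℝ := σ₁ * Real.sqrt T + σ₂ * Real.sqrt T * ρ with ha
  set b : ℝ := σ₂ * Real.sqrt T * Real.sqrt (1 - ρ ^ 2) with hb
  set C : ℝ := (r - rf - σ₂ ^ 2 / 2) * T + (μ - σ₁ ^ 2 / 2) * T with hC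
  have hfun : ∀ ω, QT ω * SfT ω
      = Q0 * Sf0 * Real.exp C * (Real.exp (a * Z₁ ω) * Real.exp (b * Z₃ ω)) := by
    intro ω
    simp only [hQT, hSfT, hZ₂]
    have e1 : Real.exp ((r - rf - σ₂ ^ 2 / 2) * T
          + σ₂ * Real.sqrt T * (ρ * Z₁ ω + Real.sqrt (1 - ρ ^ 2) * Z₃ ω))
        * Real.exp ((μ - σ₁ ^ 2 / 2) * T + σ₁ * Real.sqrt T * Z₁ ω)
        = Real.exp C * (Real.exp (a * Z₁ ω) * Real.exp (b * Z₃ ω)) := by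
      rw [← Real.exp_add, ← Real.exp_add, ← Real.exp_add]
      congr 1
      simp only [ha, hb, hC]
      ring
    linear_combination Q0 * Sf0 * e1
  have hma : Measurable fun x : ℝ => Real.exp (a * x) :=
    Real.measurable_exp.comp (measurable_const_mul a)
  have hmb : Measurable fun x : ℝ => Real.exp (b * x) :=
    Real.measurable_exp.comp (measurable_const_mul b)
  have hindep' : IndepFun (fun ω => Real.exp (a * Z₁ ω)) (fun ω => Real.exp (b * Z₃ ω)) ℙ :=
    hindep.comp hma hmb
  have hIa : (∫ ω, Real.exp (a * Z₁ ω) ∂(ℙ : Measure Ω)) = Real.exp (a ^ 2 / 2) := by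
    have h := integral_map (μ := (ℙ : Measure Ω)) hZ₁m.aemeasurable
      (f := fun x => Real.exp (a * x)) hma.aestronglyMeasurable
    rw [hZ₁] at h
    rw [← h]
    exact mgf_std_gaussian a
  have hIb : (∫ ω, Real.exp (b * Z₃ ω) ∂(ℙ : Measure Ω)) = Real.exp (b ^ 2 / 2) := by
    have h := integral_map (μ := (ℙ : Measure Ω)) hZ₃m.aemeasurable
      (f := fun x => Real.exp (b * x)) hmb.aestronglyMeasurable
    rw [hZ₃] at h
    rw [← h]
    exact mgf_std_gaussian b
  have hT2 : Real.sqrt T ^ 2 = T := Real.sq_sqrt hT.le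
  have hr2 : Real.sqrt (1 - ρ ^ 2) ^ 2 = 1 - ρ ^ 2 := Real.sq_sqrt (by nlinarith)
  have hint : (∫ ω, QT ω * SfT ω ∂(ℙ : Measure Ω))
      = Q0 * Sf0 * Real.exp ((μ + (r - rf) + ρ * σ₁ * σ₂) * T) := by
    simp only [hfun]
    rw [integral_const_mul, hindep'.integral_fun_mul_eq_mul_integral ((hma.comp hZ₁m).aestronglyMeasurable)
      ((hmb.comp hZ₃m).aestronglyMeasurable), hIa, hIb]
    have e2 : Real.exp C * (Real.exp (a ^ 2 / 2) * Real.exp (b ^ 2 / 2))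
        = Real.exp ((μ + (r - rf) + ρ * σ₁ * σ₂) * T) := by
      rw [← Real.exp_add, ← Real.exp_add]
      congr 1
      simp only [ha, hb, hC]
      linear_combination ((σ₁ + σ₂ * ρ) ^ 2 / 2 + σ₂ ^ 2 * Real.sqrt (1 - ρ ^ 2) ^ 2 / 2) * hT2
        + (σ₂ ^ 2 * T / 2) * hr2
    linear_combination Q0 * Sf0 * e2
  have hpos : Q0 * Sf0 ≠ 0 := (mul_pos hQ0 hSf0).ne'
  have base : (∫ ω, QT ω * SfT ω ∂(ℙ : Measure Ω)) = Q0 * Sf0 * Real.exp (r * T)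
      ↔ (μ + (r - rf) + ρ * σ₁ * σ₂) * T = r * T := by
    rw [hint]
    exact ⟨fun h => Real.exp_eq_exp.mp (mul_left_cancel₀ hpos h), fun h => by rw [h]⟩
  constructor
  · rw [base]
    constructor <;> intro h <;> linear_combination h
  · rw [base]
    constructor
    · intro h
      have h2 : μ * T = (r - (r - rf + ρ * σ₁ * σ₂)) * T := by linear_combination h
      exact mul_right_cancel₀ hT.ne' h2
    · intro h
      rw [h]; ring
end
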